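/- Let n > 2, ξ a primitive n-th root of unity, R = ℤ[ξ]/(n), and Q_n ≤ GL₂(R) the subgroup generated by A = [[ξ,0],[0,1]] and B = [[1,1],[0,1]]. Then the commutator subgroup [Q_n, Q_n] is abelian; that is, Q_n is metabelian. -/

import Mathlib

open Matrix
open scoped commutatorElement

section Aux

variable {R : Type} [CommRing R]

private lemma mul_e {X Y : Matrix.GeneralLinearGroup (Fin 2) R} (i j : Fin 2) :
    ((X * Y : Matrix.GeneralLinearGroup (Fin 2) R) : Matrix (Fin 2) (Fin 2) R) i j
      = (X : Matrix (Fin 2) (Fin 2) R) i 0 * (Y : Matrix (Fin 2) (Fin 2) R) 0 j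
        + (X : Matrix (Fin 2) (Fin 2) R) i 1 * (Y : Matrix (Fin 2) (Fin 2) R) 1 j := by
  simp [Units.val_mul, Matrix.mul_apply, Fin.sum_univ_two]

private lemma adj_eq (M : Matrix.GeneralLinearGroup (Fin 2) R) :
    adjugate ((M : Matrix (Fin 2) (Fin 2) R))
      = !![(M : Matrix (Fin 2) (Fin 2) R) 1 1, -((M : Matrix (Fin 2) (Fin 2) R) 0 1);
          -((M : Matrix (Fin 2) (Fin 2) R) 1 0), (M : Matrix (Fin 2) (Fin 2) R) 0 0] := by
  conv_lhs => rw [Matrix.eta_fin_two (M : Matrix (Fin 2) (Fin 2) R)]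
  rw [Matrix.adjugate_fin_two]
  simp

private lemma det_unit (M : Matrix.GeneralLinearGroup (Fin 2) R) :
    IsUnit ((M : Matrix (Fin 2) (Fin 2) R)).det := by
  exact IsUnit.of_mul_eq_one _ (by rw [← Matrix.det_mul, ← Units.val_mul, mul_inv_cancel]; simp)

private lemma inv_e (M : Matrix.GeneralLinearGroup (Fin 2) R) (i j : Fin 2) :
    ((M⁻¹ : Matrix.GeneralLinearGroup (Fin 2) R) : Matrix (Fin 2) (Fin 2) R) i j
      = Ring.inverse ((M : Matrix (Fin 2) (Fin 2) R)).det
          * adjugate ((M : Matrix (Fin 2) (Fin 2) R)) i j := by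
  rw [Matrix.coe_units_inv, Matrix.inv_def]
  simp

/-- The subgroup of upper triangular matrices. -/
def Tsub : Subgroup (Matrix.GeneralLinearGroup (Fin 2) R) where
  carrier := {M | (M : Matrix (Fin 2) (Fin 2) R) 1 0 = 0}
  one_mem' := by simp
  mul_mem' := by
    intro X Y hX hY
    simp only [Set.mem_setOf_eq] at *
    rw [mul_e]
    rw [hX, hY]; ring
  inv_mem' := by
    intro M hM
    simp only [Set.mem_setOf_eq] at *
    rw [inv_e, adj_eq, hM]
    simp

/-- The subgroup of unipotent upper triangular matrices. -/
def Usub : Subgroup (Matrix.GeneralLinearGroup (Fin 2) R) where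
  carrier := {M | (M : Matrix (Fin 2) (Fin 2) R) 1 0 = 0
    ∧ (M : Matrix (Fin 2) (Fin 2) R) 0 0 = 1 ∧ (M : Matrix (Fin 2) (Fin 2) R) 1 1 = 1}
  one_mem' := by simp
  mul_mem' := by
    intro X Y hX hY
    obtain ⟨h1, h2, h3⟩ := hX
    obtain ⟨k1, k2, k3⟩ := hY
    refine ⟨?_, ?_, ?_⟩ <;> rw [mul_e] <;> simp [h1, h2, h3, k1, k2, k3]
  inv_mem' := by
    intro M hM
    obtain ⟨h1, h2, h3⟩ := hM
    have hdet : ((M : Matrix (Fin 2) (Fin 2) R)).det = 1 := by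
      rw [Matrix.det_fin_two, h1, h2, h3]; ring
    refine ⟨?_, ?_, ?_⟩ <;> rw [inv_e, adj_eq, hdet] <;> simp [h1, h2, h3]

lemma U_comm (X Y : Matrix.GeneralLinearGroup (Fin 2) R) (hX : X ∈ Usub) (hY : Y ∈ Usub) :
    X * Y = Y * X := by
  obtain ⟨h1, h2, h3⟩ := hX
  obtain ⟨k1, k2, k3⟩ := hY
  ext i j
  fin_cases i <;> fin_cases j <;> rw [mul_e, mul_e] <;>
    simp [h1, h2, h3, k1, k2, k3] <;> ring

lemma comm_mem_U (X Y : Matrix.GeneralLinearGroup (Fin 2) R) (hX : X ∈ Tsub) (hY : Y ∈ Tsub) :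
    ⁅X, Y⁆ ∈ Usub := by
  have hXd := det_unit X
  have hYd := det_unit Y
  have hXi := Tsub.inv_mem hX
  have hYi := Tsub.inv_mem hY
  simp only [Tsub, Subgroup.mem_mk, Submonoid.mem_mk, Subsemigroup.mem_mk, Set.mem_setOf_eq] at hX hY hXi hYi
  have hdX : ((X : Matrix (Fin 2) (Fin 2) R)).det
      = (X : Matrix (Fin 2) (Fin 2) R) 0 0 * (X : Matrix (Fin 2) (Fin 2) R) 1 1 := by
    rw [Matrix.det_fin_two, hX]; ring
  have hdY : ((Y : Matrix (Fin 2) (Fin 2) R)).det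
      = (Y : Matrix (Fin 2) (Fin 2) R) 0 0 * (Y : Matrix (Fin 2) (Fin 2) R) 1 1 := by
    rw [Matrix.det_fin_two, hY]; ring
  have hXinv00 : ((X⁻¹ : Matrix.GeneralLinearGroup (Fin 2) R) : Matrix (Fin 2) (Fin 2) R) 0 0
      = Ring.inverse ((X : Matrix (Fin 2) (Fin 2) R)).det * (X : Matrix (Fin 2) (Fin 2) R) 1 1 := by
    rw [inv_e, adj_eq]; simp
  have hXinv11 : ((X⁻¹ : Matrix.GeneralLinearGroup (Fin 2) R) : Matrix (Fin 2) (Fin 2) R) 1 1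
      = Ring.inverse ((X : Matrix (Fin 2) (Fin 2) R)).det * (X : Matrix (Fin 2) (Fin 2) R) 0 0 := by
    rw [inv_e, adj_eq]; simp
  have hYinv00 : ((Y⁻¹ : Matrix.GeneralLinearGroup (Fin 2) R) : Matrix (Fin 2) (Fin 2) R) 0 0
      = Ring.inverse ((Y : Matrix (Fin 2) (Fin 2) R)).det * (Y : Matrix (Fin 2) (Fin 2) R) 1 1 := by
    rw [inv_e, adj_eq]; simp
  have hYinv11 : ((Y⁻¹ : Matrix.GeneralLinearGroup (Fin 2) R) : Matrix (Fin 2) (Fin 2) R) 1 1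
      = Ring.inverse ((Y : Matrix (Fin 2) (Fin 2) R)).det * (Y : Matrix (Fin 2) (Fin 2) R) 0 0 := by
    rw [inv_e, adj_eq]; simp
  rw [commutatorElement_def]
  set iX := Ring.inverse ((X : Matrix (Fin 2) (Fin 2) R)).det with hiX
  set iY := Ring.inverse ((Y : Matrix (Fin 2) (Fin 2) R)).det with hiY
  have e1 : (X : Matrix (Fin 2) (Fin 2) R) 0 0 * (X : Matrix (Fin 2) (Fin 2) R) 1 1 * iX = 1 := by
    rw [← hdX, hiX]; exact Ring.mul_inverse_cancel _ hXd
  have e2 : (Y : Matrix (Fin 2) (Fin 2) R) 0 0 * (Y : Matrix (Fin 2) (Fin 2) R) 1 1 * iY = 1 := by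
    rw [← hdY, hiY]; exact Ring.mul_inverse_cancel _ hYd
  refine ⟨?_, ?_, ?_⟩ <;>
    simp only [mul_e] <;>
    simp only [hX, hY, hXi, hYi, hXinv00, hXinv11, hYinv00, hYinv11,
      zero_mul, mul_zero, add_zero, zero_add]
  · linear_combination ((Y : Matrix (Fin 2) (Fin 2) R) 0 0 * (Y : Matrix (Fin 2) (Fin 2) R) 1 1 * iY) * e1 + e2
  · linear_combination ((Y : Matrix (Fin 2) (Fin 2) R) 0 0 * (Y : Matrix (Fin 2) (Fin 2) R) 1 1 * iY) * e1 + e2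

end Aux

/-- Here `S` plays the role of the cyclotomic ring `ℤ[ξ] ⊆ ℂ` (a subring of `ℂ` generated by a
primitive `n`-th root of unity `ξ`), and `R = ℤ[ξ]/(n)` is presented as a quotient of `S` by the
ideal generated by `n`. -/
theorem stmt_1 (n : ℕ) (hn : 2 < n) (ξ : ℂ) (hξ : IsPrimitiveRoot ξ n)
    (S : Type) [CommRing S] (ι : S →+* ℂ) (hι : Function.Injective ι)
    (ξS : S) (hξS : ι ξS = ξ) (hgen : Algebra.adjoin ℤ ({ξS} : Set S) = ⊤)
    (R : Type) [CommRing R] (π : S →+* R) (hπ : Function.Surjective π)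
    (hker : RingHom.ker π = Ideal.span {(n : S)})
    (A B : Matrix.GeneralLinearGroup (Fin 2) R)
    (hA : (A : Matrix (Fin 2) (Fin 2) R) = !![π ξS, 0; 0, 1])
    (hB : (B : Matrix (Fin 2) (Fin 2) R) = !![1, 1; 0, 1]) :
    ∀ x ∈ ⁅Subgroup.closure {A, B}, Subgroup.closure {A, B}⁆,
      ∀ y ∈ ⁅Subgroup.closure {A, B}, Subgroup.closure {A, B}⁆, x * y = y * x := by
  have hT : Subgroup.closure {A, B} ≤ (Tsub : Subgroup (Matrix.GeneralLinearGroup (Fin 2) R)) := by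
    rw [Subgroup.closure_le]
    intro x hx
    show (x : Matrix (Fin 2) (Fin 2) R) 1 0 = 0
    rcases hx with h | h
    · rw [h, hA]; simp
    · rw [h, hB]; simp
  have hU : ⁅Subgroup.closure {A, B}, Subgroup.closure {A, B}⁆
      ≤ (Usub : Subgroup (Matrix.GeneralLinearGroup (Fin 2) R)) := by
    rw [Subgroup.commutator_le]
    intro g hg h hh
    exact comm_mem_U g h (hT hg) (hT hh)
  intro x hx y hy
  exact U_comm x y (hU hx) (hU hy)
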